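/- Fix integers k ≥ 2 and d ≥ 3 and set L := (k−1)(d−1). There exist constants C > 0 and θ₀ ∈ (0, 1 − 1/L), depending only on d and k, such that for every θ ∈ (0, θ₀], c·∫₀^θ W(p)^L dp ≤ (c/(L+1))·θ^{L+1} + C·θ^{L+2}. -/

import Mathlib

open MeasureTheory

lemma aux_pow8 (M : ℝ) (hM : 0 ≤ M) : ∀ (n : ℕ) (x : ℝ), 0 ≤ x → x ≤ M →
    (1+x)^n ≤ 1 + n*(1+M)^n*x := by
  intro n
  induction n with
  | zero => intro x hx _; simp
  | succ n ih =>
    intro x hx hxM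
    have h1 := ih x hx hxM
    have hA : (1:ℝ) ≤ (1+M)^n := one_le_pow₀ (by linarith)
    have hA0 : (0:ℝ) ≤ (1+M)^n := by positivity
    have key : (1+x)^n*(1+x) ≤ (1 + n*(1+M)^n*x)*(1+x) :=
      mul_le_mul_of_nonneg_right h1 (by linarith)
    have hn : (0:ℝ) ≤ (n:ℝ) := Nat.cast_nonneg n
    rw [pow_succ, pow_succ]
    push_cast
    nlinarith [mul_nonneg (sub_nonneg.2 hA) hx,
      mul_nonneg hn (mul_nonneg (mul_nonneg hA0 hx) (sub_nonneg.2 hxM)),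
      mul_nonneg (mul_nonneg hA0 hx) hM]

lemma R_le8 (L : ℕ) (hL2 : 2 ≤ L) (p r : ℝ) (hp0 : 0 ≤ p) (hp : p ≤ 1/2^(L+1))
    (hr0 : 0 ≤ r) (hr1 : r < 1) (hfix : r = p + (1-p)*r^L) : r ≤ 2*p := by
  have h8 : (8:ℝ) ≤ 2^(L+1) := by
    calc (8:ℝ) = 2^3 := by norm_num
    _ ≤ 2^(L+1) := pow_le_pow_right₀ (by norm_num) (by omega)
  have h2pos : (0:ℝ) < 2^(L+1) := by positivity
  have hp' : p * 2^(L+1) ≤ 1 := by rw [le_div_iff₀ h2pos] at hp; linarith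
  have hp1 : p ≤ 1 := by nlinarith
  rcases eq_or_lt_of_le hp0 with hp0' | hp0'
  · have hfix' : r = r^L := by rw [← hp0'] at hfix; linarith
    have hrr : r^L ≤ r^2 := pow_le_pow_of_le_one hr0 hr1.le hL2
    nlinarith [sq_nonneg r]
  · by_contra hcon
    push_neg at hcon
    have h2p1 : 2*p < 1 := by linarith
    have hne : (1:ℝ) - 2*p ≠ 0 := by linarith
    set t : ℝ := (1-r)/(1-2*p) with ht
    have ht0 : 0 < t := div_pos (by linarith) (by linarith)
    have h5 : t * (1-2*p) = 1-r := div_mul_cancel₀ _ hne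
    have hcomb : t*(2*p) + (1-t)*1 = r := by linear_combination -h5
    have hconv := (convexOn_pow (𝕜 := ℝ) L).2 (Set.mem_Ici.2 (by linarith : (0:ℝ) ≤ 2*p))
      (Set.mem_Ici.2 zero_le_one) ht0.le (by nlinarith : (0:ℝ) ≤ 1-t) (by ring)
    simp only [smul_eq_mul] at hconv
    rw [hcomb] at hconv
    have hpL : (2*p)^L ≤ p/2 := by
      have h1 : (2*p)^L ≤ (2*p)^2 := pow_le_pow_of_le_one (by linarith) (by linarith) hL2
      nlinarith [sq_nonneg p]
    have hrL : r^L ≤ t*(p/2) + (1-t) := by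
      have h6 := mul_le_mul_of_nonneg_left hpL ht0.le
      calc r^L ≤ t*(2*p)^L + (1-t)*1^L := hconv
        _ ≤ t*(p/2) + (1-t) := by simp only [one_pow, mul_one]; linarith
    have hkey : r ≤ p + (1-p)*(t*(p/2) + (1-t)) := by
      rw [hfix]
      have := mul_le_mul_of_nonneg_left hrL (by linarith : (0:ℝ) ≤ 1-p)
      linarith
    have hreq : r = 2*p*t + 1 - t := by rw [← hcomb]; ring
    nlinarith [mul_pos ht0 hp0', mul_pos (mul_pos hp0' hp0') ht0]

lemma aux_logb8 : 0 < 2 - Real.logb 2 3 ∧ 2 - Real.logb 2 3 ≤ 1 := by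
  have h4 : Real.logb 2 4 = 2 := by
    rw [show (4:ℝ) = 2^(2:ℕ) by norm_num, Real.logb_pow, Real.logb_self_eq_one (by norm_num)]
    norm_num
  have h2 := Real.logb_self_eq_one (b := 2) (by norm_num)
  constructor
  · nlinarith [Real.strictMonoOn_logb (by norm_num : (1:ℝ) < 2)
      (by norm_num : (3:ℝ) ∈ Set.Ioi 0) (by norm_num : (4:ℝ) ∈ Set.Ioi 0)
      (by norm_num : (3:ℝ) < 4)]
  · nlinarith [Real.logb_le_logb_of_le (by norm_num : (1:ℝ) < 2)
      (by norm_num : (0:ℝ) < 2) (by norm_num : (2:ℝ) ≤ 3)]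

set_option maxHeartbeats 1000000 in
/-- With notation as in the paper (`L = (k-1)(d-1)`, `c = 2 - log₂ 3`,
`W` as below), there exist constants `C > 0` and `θ₀ ∈ (0, 1-1/L)`, depending only on
`d` and `k`, such that for every `θ ∈ (0, θ₀]`,
`c·∫₀^θ W(p)^L dp ≤ (c/(L+1))·θ^(L+1) + C·θ^(L+2)`. -/
theorem stmt_8 (k d : ℕ) (hk : 2 ≤ k) (hd : 3 ≤ d) (L : ℕ) (hL : L = (k-1)*(d-1))
    (R : ℝ → ℝ)
    (hR : ∀ p : ℝ, 0 ≤ p → p < 1 - 1/(L:ℝ) →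
      R p ∈ Set.Ico (0:ℝ) 1 ∧ R p = p + (1-p) * (R p)^L)
    (hR1 : ∀ p : ℝ, 1 - 1/(L:ℝ) ≤ p → p ≤ 1 → R p = 1)
    (W : ℝ → ℝ → ℝ)
    (hW : ∀ θ p : ℝ,
      (0 ≤ p → p < θ →
        W θ p = p
          + (2 - Real.logb 2 3) * (θ - p) *
              ((p^(k-1))^(d-1) + ((d:ℝ)-1) * (1 - p^(k-1)) * (p^(k-1))^(d-2))
          + (1 - p - (2 - Real.logb 2 3) * (θ - p)) * ((R p)^(k-1))^(d-1)) ∧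
      (θ ≤ p → p ≤ 1 → W θ p = R p)) :
    ∃ C θ₀ : ℝ, 0 < C ∧ 0 < θ₀ ∧ θ₀ < 1 - 1/(L:ℝ) ∧
      ∀ θ : ℝ, 0 < θ → θ ≤ θ₀ →
        (2 - Real.logb 2 3) * (∫ p in (0:ℝ)..θ, (W θ p)^L)
          ≤ ((2 - Real.logb 2 3)/((L:ℝ)+1)) * θ^(L+1) + C * θ^(L+2) := by
  obtain ⟨hc0, hc1⟩ := aux_logb8
  set c : ℝ := 2 - Real.logb 2 3 with hcdef
  have hL2 : 2 ≤ L := by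
    have h1 : 1 ≤ k - 1 := by omega
    have h2 : 2 ≤ d - 1 := by omega
    calc 2 = 1 * 2 := by omega
    _ ≤ (k-1)*(d-1) := Nat.mul_le_mul h1 h2
    _ = L := hL.symm
  have hLr : (2:ℝ) ≤ (L:ℝ) := by exact_mod_cast hL2
  have h8 : (8:ℝ) ≤ 2^(L+1) := by
    calc (8:ℝ) = 2^3 := by norm_num
    _ ≤ 2^(L+1) := pow_le_pow_right₀ (by norm_num) (by omega)
  have h2pos : (0:ℝ) < 2^(L+1) := by positivity
  set θ₀ : ℝ := 1/2^(L+1) with hθ₀def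
  have hθ₀pos : 0 < θ₀ := by positivity
  have hθ₀8 : θ₀ ≤ 1/8 := by
    rw [hθ₀def, div_le_div_iff₀ h2pos (by norm_num)]; linarith
  have hhalf : (1:ℝ)/2 ≤ 1 - 1/(L:ℝ) := by
    have hLpos : (0:ℝ) < L := by linarith
    have : 1/(L:ℝ) ≤ 1/2 := by
      apply div_le_div_of_nonneg_left (by norm_num) (by norm_num) hLr
    linarith
  set A : ℝ := (d:ℝ) + 2^L with hAdef
  have hA0 : 0 < A := by positivity
  set C : ℝ := A*(1+A)^(L+1) with hCdef
  have hC0 : 0 < C := by positivity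
  refine ⟨C, θ₀, hC0, hθ₀pos, by linarith, ?_⟩
  intro θ hθ0 hθθ₀
  have hθ8 : θ ≤ 1/8 := le_trans hθθ₀ hθ₀8
  have hθ1 : θ ≤ 1 := by linarith
  -- pointwise bound
  have hpoint : ∀ p : ℝ, 0 ≤ p → p < θ → 0 ≤ W θ p ∧ W θ p ≤ p + A*θ^2 := by
    intro p hp0 hpθ
    have hp1 : p ≤ 1 := by linarith
    have hpθ₀ : p ≤ θ₀ := le_trans hpθ.le hθθ₀
    have hplt : p < 1 - 1/(L:ℝ) := by linarith
    obtain ⟨hmem, hfix⟩ := hR p hp0 hplt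
    obtain ⟨hR0, hRlt1⟩ := hmem
    have hRle : R p ≤ 2*p := R_le8 L hL2 p (R p) hp0 hpθ₀ hR0 hRlt1 hfix
    have hWeq := (hW θ p).1 hp0 hpθ
    set q : ℝ := p^(k-1) with hqdef
    have hq0 : 0 ≤ q := pow_nonneg hp0 _
    have hq1 : q ≤ 1 := pow_le_one₀ hp0 hp1
    have hkd1 : 1 ≤ (k-1)*(d-1) := by
      have h1 : 1 ≤ k - 1 := by omega
      have h2 : 1 ≤ d - 1 := by omega
      calc 1 = 1*1 := rfl
      _ ≤ (k-1)*(d-1) := Nat.mul_le_mul h1 h2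
    have hkd2 : 1 ≤ (k-1)*(d-2) := by
      have h1 : 1 ≤ k - 1 := by omega
      have h2 : 1 ≤ d - 2 := by omega
      calc 1 = 1*1 := rfl
      _ ≤ (k-1)*(d-2) := Nat.mul_le_mul h1 h2
    have e1 : q^(d-1) ≤ p := by
      rw [hqdef, ← pow_mul]
      calc p^((k-1)*(d-1)) ≤ p^1 := pow_le_pow_of_le_one hp0 hp1 hkd1
      _ = p := pow_one p
    have e2 : q^(d-2) ≤ p := by
      rw [hqdef, ← pow_mul]
      calc p^((k-1)*(d-2)) ≤ p^1 := pow_le_pow_of_le_one hp0 hp1 hkd2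
      _ = p := pow_one p
    have hd3 : (3:ℝ) ≤ (d:ℝ) := by exact_mod_cast hd
    set E : ℝ := q^(d-1) + ((d:ℝ)-1)*(1-q)*q^(d-2) with hEdef
    have he10 : 0 ≤ q^(d-1) := pow_nonneg hq0 _
    have he20 : 0 ≤ q^(d-2) := pow_nonneg hq0 _
    have hE0 : 0 ≤ E := by
      rw [hEdef]
      have : 0 ≤ ((d:ℝ)-1)*(1-q)*q^(d-2) :=
        mul_nonneg (mul_nonneg (by linarith) (by linarith)) he20
      linarith
    have hEd : E ≤ (d:ℝ)*θ := by
      rw [hEdef]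
      have h2a : (1-q)*q^(d-2) ≤ p := by
        calc (1-q)*q^(d-2) ≤ 1*q^(d-2) :=
              mul_le_mul_of_nonneg_right (by linarith) he20
        _ = q^(d-2) := one_mul _
        _ ≤ p := e2
      have h2 : ((d:ℝ)-1)*((1-q)*q^(d-2)) ≤ ((d:ℝ)-1)*p :=
        mul_le_mul_of_nonneg_left h2a (by linarith)
      have h3 : (d:ℝ)*p ≤ (d:ℝ)*θ := mul_le_mul_of_nonneg_left hpθ.le (by linarith)
      linarith
    -- third term
    have hRL : ((R p)^(k-1))^(d-1) = (R p)^L := by rw [← pow_mul, hL]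
    have hRL0 : 0 ≤ (R p)^L := pow_nonneg hR0 _
    have hRLb : (R p)^L ≤ 2^L*θ^2 := by
      calc (R p)^L ≤ (2*θ)^L := by
            apply pow_le_pow_left₀ hR0 (by linarith)
      _ = 2^L*θ^L := mul_pow 2 θ L
      _ ≤ 2^L*θ^2 := by
            apply mul_le_mul_of_nonneg_left _ (by positivity)
            exact pow_le_pow_of_le_one hθ0.le hθ1 hL2
    have hcmul1 : c*(θ-p) ≤ 1*(θ-p) :=
      mul_le_mul_of_nonneg_right hc1 (by linarith)
    have hcmul0 : 0 ≤ c*(θ-p) := mul_nonneg hc0.le (by linarith)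
    have hcoef0 : 0 ≤ 1 - p - c*(θ-p) := by linarith
    have hcoef1 : 1 - p - c*(θ-p) ≤ 1 := by linarith
    have ht3 : (1 - p - c*(θ-p)) * ((R p)^(k-1))^(d-1) ≤ 2^L*θ^2 := by
      rw [hRL]
      calc (1 - p - c*(θ-p)) * (R p)^L ≤ 1 * (R p)^L :=
            mul_le_mul_of_nonneg_right hcoef1 hRL0
      _ = (R p)^L := one_mul _
      _ ≤ 2^L*θ^2 := hRLb
    have ht30 : 0 ≤ (1 - p - c*(θ-p)) * ((R p)^(k-1))^(d-1) := by
      rw [hRL]; exact mul_nonneg hcoef0 hRL0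
    have ht2b : c*(θ-p)*E ≤ (d:ℝ)*θ^2 := by
      have h1 : c*(θ-p) ≤ θ := by linarith
      have h2 : 0 ≤ c*(θ-p) := hcmul0
      calc c*(θ-p)*E ≤ θ*E := mul_le_mul_of_nonneg_right h1 hE0
      _ ≤ θ*((d:ℝ)*θ) := mul_le_mul_of_nonneg_left hEd hθ0.le
      _ = (d:ℝ)*θ^2 := by ring
    have ht20 : 0 ≤ c*(θ-p)*E := by
      exact mul_nonneg (mul_nonneg hc0.le (by linarith)) hE0
    rw [hWeq]
    constructor
    · linarith
    · rw [hAdef]; linarith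
  -- integral bound
  set B : ℝ := A*θ^2 with hBdef
  have hB0 : 0 ≤ B := by positivity
  have hgint : IntervalIntegrable (fun p => (p+B)^L) volume 0 θ :=
    ((continuous_id.add continuous_const).pow L).intervalIntegrable 0 θ
  set D : ℝ := (L:ℝ)+1 with hDdef
  have hD0 : (0:ℝ) < D := by rw [hDdef]; linarith
  have hRHS0 : 0 ≤ (c/D) * θ^(L+1) + C * θ^(L+2) := by positivity
  by_cases hint : IntervalIntegrable (fun p => (W θ p)^L) volume 0 θ
  · have hne : ∀ᵐ (p:ℝ) ∂(volume : Measure ℝ), p ≠ θ := by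
      exact compl_mem_ae_iff.mpr (Real.volume_singleton (a := θ))
    have hae : (fun p => (W θ p)^L) ≤ᵐ[volume.restrict (Set.Icc (0:ℝ) θ)]
        (fun p => (p+B)^L) := by
      filter_upwards [ae_restrict_mem measurableSet_Icc, ae_restrict_of_ae hne]
        with p hmem hpne
      have hpθ : p < θ := lt_of_le_of_ne hmem.2 hpne
      obtain ⟨hW0, hWle⟩ := hpoint p hmem.1 hpθ
      exact pow_le_pow_left₀ hW0 (by linarith) L
    have hmono := intervalIntegral.integral_mono_ae_restrict hθ0.le hint hgint hae
    have hgval : ∫ p in (0:ℝ)..θ, (p+B)^L = ((θ+B)^(L+1) - (0+B)^(L+1))/D := by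
      have h := intervalIntegral.integral_comp_add_right (a := (0:ℝ)) (b := θ)
        (fun x => x^L) B
      rw [h, integral_pow, hDdef]
    have hgb : ∫ p in (0:ℝ)..θ, (p+B)^L ≤ (θ+B)^(L+1)/D := by
      rw [hgval, sub_div]
      have hz : (0:ℝ) ≤ (0+B)^(L+1)/D := by positivity
      linarith
    have hfac : (θ+B)^(L+1) = θ^(L+1)*(1+A*θ)^(L+1) := by
      rw [← mul_pow]; congr 1; rw [hBdef]; ring
    have haux : (1+A*θ)^(L+1) ≤ 1 + D*(1+A)^(L+1)*(A*θ) := by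
      have hAθ : A*θ ≤ A := by
        calc A*θ ≤ A*1 := mul_le_mul_of_nonneg_left hθ1 hA0.le
        _ = A := mul_one A
      have h := aux_pow8 A hA0.le (L+1) (A*θ) (by positivity) hAθ
      push_cast at h
      rw [hDdef]; exact h
    calc c * ∫ p in (0:ℝ)..θ, (W θ p)^L ≤ c * ∫ p in (0:ℝ)..θ, (p+B)^L :=
          mul_le_mul_of_nonneg_left hmono hc0.le
    _ ≤ c * ((θ+B)^(L+1)/D) := mul_le_mul_of_nonneg_left hgb hc0.le
    _ = (c/D) * (θ^(L+1)*(1+A*θ)^(L+1)) := by rw [hfac]; ring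
    _ ≤ (c/D) * (θ^(L+1)*(1 + D*(1+A)^(L+1)*(A*θ))) := by
          apply mul_le_mul_of_nonneg_left _ (by positivity)
          exact mul_le_mul_of_nonneg_left haux (by positivity)
    _ = (c/D) * θ^(L+1) + (c*(1+A)^(L+1)*A) * θ^(L+2) := by
          field_simp
          ring
    _ ≤ (c/D) * θ^(L+1) + C * θ^(L+2) := by
          have h1 : c*(1+A)^(L+1)*A ≤ C := by
            rw [hCdef]
            have := mul_le_mul_of_nonneg_right hc1
              (by positivity : (0:ℝ) ≤ (1+A)^(L+1)*A)
            linarith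
          have h2 : (0:ℝ) ≤ θ^(L+2) := by positivity
          have h3 := mul_le_mul_of_nonneg_right h1 h2
          linarith
  · rw [intervalIntegral.integral_undef hint, mul_zero]
    exact hRHS0
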